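/- Betweenness reduces to simultaneous two-level crossing-freeness: if (S, X) is a positive instance of Betweenness, witnessed by a linear order ≺ on S, then the instance ⟨G1, G2, G3⟩ of the previous construction admits linear orders on levels l_1 and l_2 such that: (i) vertices u_{1,1},…,u_{1,n},…,u_{k,1},…,u_{k,n} appear in this order on l_1 (with each block u_{i,·} ordered according to ≺); (ii) vertices v_{1,1},…,v_{1,n},…,v_{k−1,1},…,v_{k−1,n} appear in this order on l_2; (iii) x_i and y_i precede x_{i+1} and y_{i+1} on l_2; (iv) x_i precedes y_i iff s_{a_i} ≺ s_{c_i}; and under these orders no two edges of the same graph G1, G2, or G3 cross. -/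

import Mathlib

open Real in
lemma g1_bounds (x : ℝ) : -1 < arctan x / 2 ∧ arctan x / 2 < 1 := by
  have h1 := Real.arctan_lt_pi_div_two x
  have h2 := Real.neg_pi_div_two_lt_arctan x
  have h3 := Real.pi_le_four
  constructor <;> nlinarith

open Real in
lemma g2_bounds (x : ℝ) : -1 < arctan x / 4 - 1/2 ∧ arctan x / 4 - 1/2 < 0 := by
  have h1 := Real.arctan_lt_pi_div_two x
  have h2 := Real.neg_pi_div_two_lt_arctan x
  have h3 := Real.pi_le_four
  have h4 := Real.pi_pos
  constructor <;> nlinarith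

lemma lex_lt {i i' : ℕ} {r r' : ℝ}
    (hr1 : -1 < r) (hr2 : r < 1) (hr1' : -1 < r') (hr2' : r' < 1) :
    (2*(i:ℝ) + r < 2*(i':ℝ) + r' ↔ i < i' ∨ (i = i' ∧ r < r')) := by
  rcases lt_trichotomy i i' with h | h | h
  · have hc : (i:ℝ) + 1 ≤ (i':ℝ) := by exact_mod_cast h
    exact ⟨fun _ => Or.inl h, fun _ => by linarith⟩
  · subst h
    constructor
    · intro hlt; exact Or.inr ⟨rfl, by linarith⟩
    · rintro (h | ⟨-, h⟩)
      · exact absurd h (lt_irrefl _)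
      · linarith
  · have hc : (i':ℝ) + 1 ≤ (i:ℝ) := by exact_mod_cast h
    constructor
    · intro _; linarith
    · rintro (h' | ⟨h', -⟩) <;> omega

lemma sep_eq {i i' : ℕ} {e e' : ℝ} (he : e = 1/4 ∨ e = 1/2) (he' : e' = 1/4 ∨ e' = 1/2)
    (h : 2*(i:ℝ) + e = 2*(i':ℝ) + e') : i = i' := by
  by_contra hne
  rcases lt_or_gt_of_ne hne with hlt | hlt
  · have : (i:ℝ) + 1 ≤ (i':ℝ) := by exact_mod_cast hlt
    rcases he with rfl | rfl <;> rcases he' with rfl | rfl <;> linarith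
  · have : (i':ℝ) + 1 ≤ (i:ℝ) := by exact_mod_cast hlt
    rcases he with rfl | rfl <;> rcases he' with rfl | rfl <;> linarith

lemma sep_ne {i i' : ℕ} {e r : ℝ} (he1 : 0 < e) (he2 : e < 1) (hr1 : -1 < r) (hr2 : r < 0) :
    2*(i:ℝ) + e ≠ 2*(i':ℝ) + r := by
  intro h
  rcases lt_trichotomy i i' with hlt | heq | hlt
  · have : (i:ℝ) + 1 ≤ (i':ℝ) := by exact_mod_cast hlt
    linarith
  · subst heq; linarith
  · have : (i':ℝ) + 1 ≤ (i:ℝ) := by exact_mod_cast hlt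
    linarith

/-- Two edges `(a,b)` and `(a',b')` between two levels cross. -/
def Cross (a b a' b' : ℝ) : Prop := (a < a' ∧ b' < b) ∨ (a' < a ∧ b < b')

/-- Level-1 endpoint of the `q`-th edge (`q < 4`) of the `i`-th triplet gadget
`T_i = (u_{i,a i}, x_i, u_{i,b i}, y_i, u_{i,c i})`. -/
def tripL (σu : ℕ → ℕ → ℝ) (a b c : ℕ → ℕ) (i q : ℕ) : ℝ :=
  if q = 0 then σu i (a i) else if q = 1 then σu i (b i)
  else if q = 2 then σu i (b i) else σu i (c i)

/-- Level-2 endpoint of the `q`-th edge of the `i`-th triplet gadget. -/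
def tripR (σx σy : ℕ → ℝ) (i q : ℕ) : ℝ :=
  if q ≤ 1 then σx i else σy i


lemma trip_nocross (σu : ℕ → ℕ → ℝ) (σx σy : ℕ → ℝ) (a b c : ℕ → ℕ) (i q q' : ℕ)
    (hq : q < 4) (hq' : q' < 4) (hqq : q ≠ q')
    (hab : (σu i (a i) < σu i (b i) ∧ σu i (b i) < σu i (c i) ∧ σx i < σy i) ∨
           (σu i (c i) < σu i (b i) ∧ σu i (b i) < σu i (a i) ∧ σy i < σx i)) :
    ¬ Cross (tripL σu a b c i q) (tripR σx σy i q) (tripL σu a b c i q') (tripR σx σy i q') := by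
  interval_cases q <;> interval_cases q' <;>
    first
    | omega
    | (rintro (⟨g1, g2⟩ | ⟨g1, g2⟩) <;> rcases hab with ⟨h1, h2, h3⟩ | ⟨h1, h2, h3⟩ <;>
        simp only [tripL, tripR] at g1 g2 <;> norm_num at g1 <;> norm_num at g2 <;> linarith)

/-- if `(S, X)` is a positive instance of Betweenness, witnessed by the linear
order given by injective `p` (`j ≺ j' ↔ p j < p j'`), then the constructed instance
`⟨G1, G2, G3⟩` admits linear orders on the two levels satisfying properties (i)–(iv) and in
which no two edges of the same graph cross. -/
theorem betweenness_to_simultaneous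
    (n k : ℕ) (a b c : ℕ → ℕ)
    (ha : ∀ i, i < k → a i < n) (hb : ∀ i, i < k → b i < n) (hc : ∀ i, i < k → c i < n)
    (hdis : ∀ i, i < k → a i ≠ b i ∧ b i ≠ c i ∧ a i ≠ c i)
    (p : ℕ → ℝ)
    (hpinj : ∀ j j', j < n → j' < n → p j = p j' → j = j')
    (hbet : ∀ i, i < k →
      (p (a i) < p (b i) ∧ p (b i) < p (c i)) ∨
      (p (c i) < p (b i) ∧ p (b i) < p (a i))) :
    ∃ (σu σv : ℕ → ℕ → ℝ) (σx σy : ℕ → ℝ),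
      -- level-2 positions of distinct vertices are distinct
      (∀ i i', i < k → i' < k → σx i = σx i' → i = i') ∧
      (∀ i i', i < k → i' < k → σy i = σy i' → i = i') ∧
      (∀ i i', i < k → i' < k → σx i ≠ σy i') ∧
      (∀ i i' j, i < k → i' < k - 1 → j < n → σx i ≠ σv i' j ∧ σy i ≠ σv i' j) ∧
      -- (i) the u-blocks appear in order of i, each block ordered according to ≺
      (∀ i j i' j', i < k → j < n → i' < k → j' < n →
        (σu i j < σu i' j' ↔ (i < i' ∨ (i = i' ∧ p j < p j')))) ∧
      -- (ii) the v-blocks appear in order of i, each block ordered according to ≺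
      (∀ i j i' j', i < k - 1 → j < n → i' < k - 1 → j' < n →
        (σv i j < σv i' j' ↔ (i < i' ∨ (i = i' ∧ p j < p j')))) ∧
      -- (iii) x_i and y_i precede x_{i+1} and y_{i+1}
      (∀ i, i + 1 < k → σx i < σx (i + 1) ∧ σx i < σy (i + 1) ∧
        σy i < σx (i + 1) ∧ σy i < σy (i + 1)) ∧
      -- (iv) x_i precedes y_i iff s_{a i} ≺ s_{c i}
      (∀ i, i < k → (σx i < σy i ↔ p (a i) < p (c i))) ∧
      -- no two edges of G1 cross
      (∀ i j i' j', i < k - 1 → j < n → i' < k - 1 → j' < n →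
        ¬ Cross (σu i j) (σv i j) (σu i' j') (σv i' j')) ∧
      -- no two edges of G2 cross
      (∀ i j i' j', i < k - 1 → j < n → i' < k - 1 → j' < n →
        ¬ Cross (σu (i + 1) j) (σv i j) (σu (i' + 1) j') (σv i' j')) ∧
      -- no two edges of G3 cross
      (∀ i q i' q', i < k → q < 4 → i' < k → q' < 4 → (i, q) ≠ (i', q') →
        ¬ Cross (tripL σu a b c i q) (tripR σx σy i q)
                (tripL σu a b c i' q') (tripR σx σy i' q')) := by
  have hmono1 : ∀ x y : ℝ, Real.arctan x / 2 < Real.arctan y / 2 ↔ x < y := by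
    intro x y
    constructor
    · intro h; exact Real.arctan_strictMono.lt_iff_lt.mp (by linarith)
    · intro h; have := Real.arctan_strictMono h; linarith
  have hmono2 : ∀ x y : ℝ,
      Real.arctan x / 4 - 1/2 < Real.arctan y / 4 - 1/2 ↔ x < y := by
    intro x y
    constructor
    · intro h; exact Real.arctan_strictMono.lt_iff_lt.mp (by linarith)
    · intro h; have := Real.arctan_strictMono h; linarith
  have hu : ∀ (i j i' j' : ℕ), 2*(i:ℝ) + Real.arctan (p j) / 2 < 2*(i':ℝ) + Real.arctan (p j') / 2 ↔
      (i < i' ∨ (i = i' ∧ p j < p j')) := by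
    intro i j i' j'
    rw [lex_lt (g1_bounds (p j)).1 (g1_bounds (p j)).2 (g1_bounds (p j')).1
      (g1_bounds (p j')).2, hmono1]
  have hv : ∀ (i j i' j' : ℕ), 2*(i:ℝ) + (Real.arctan (p j) / 4 - 1/2) <
      2*(i':ℝ) + (Real.arctan (p j') / 4 - 1/2) ↔
      (i < i' ∨ (i = i' ∧ p j < p j')) := by
    intro i j i' j'
    rw [lex_lt (g2_bounds (p j)).1 ((g2_bounds (p j)).2.trans one_pos)
      (g2_bounds (p j')).1 ((g2_bounds (p j')).2.trans one_pos), hmono2]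
  refine ⟨fun i j => 2*(i:ℝ) + Real.arctan (p j) / 2,
          fun i j => 2*(i:ℝ) + (Real.arctan (p j) / 4 - 1/2),
          fun i => 2*(i:ℝ) + (if p (a i) < p (c i) then (1:ℝ)/4 else 1/2),
          fun i => 2*(i:ℝ) + (if p (a i) < p (c i) then (1:ℝ)/2 else 1/4),
          ?_, ?_, ?_, ?_, ?_, ?_, ?_, ?_, ?_, ?_, ?_⟩
  · intro i i' _ _ h
    exact sep_eq (by split_ifs <;> norm_num) (by split_ifs <;> norm_num) h
  · intro i i' _ _ h
    exact sep_eq (by split_ifs <;> norm_num) (by split_ifs <;> norm_num) h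
  · intro i i' _ _ h
    have hii : i = i' :=
      sep_eq (e := if p (a i) < p (c i) then (1:ℝ)/4 else 1/2)
        (e' := if p (a i') < p (c i') then (1:ℝ)/2 else 1/4)
        (by split_ifs <;> norm_num) (by split_ifs <;> norm_num) h
    subst hii
    beta_reduce at h
    split_ifs at h <;> linarith
  · intro i i' j _ _ _
    constructor
    · exact sep_ne (by split_ifs <;> norm_num) (by split_ifs <;> norm_num)
        (g2_bounds (p j)).1 (g2_bounds (p j)).2
    · exact sep_ne (by split_ifs <;> norm_num) (by split_ifs <;> norm_num)
        (g2_bounds (p j)).1 (g2_bounds (p j)).2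
  · exact fun i j i' j' _ _ _ _ => hu i j i' j'
  · exact fun i j i' j' _ _ _ _ => hv i j i' j'
  · intro i _
    refine ⟨?_, ?_, ?_, ?_⟩ <;> (beta_reduce; push_cast; split_ifs <;> linarith)
  · intro i _
    beta_reduce
    split_ifs with h
    · exact ⟨fun _ => h, fun _ => by norm_num⟩
    · constructor
      · intro h2; linarith
      · intro h2; exact absurd h2 h
  · intro i j i' j' _ _ _ _ hcr
    rcases hcr with ⟨h1, h2⟩ | ⟨h1, h2⟩ <;>
      (beta_reduce at h1 h2; rw [hu] at h1; rw [hv] at h2;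
       rcases h1 with h1 | ⟨e1, h1⟩ <;> rcases h2 with h2 | ⟨e2, h2⟩ <;>
         first | omega | linarith)
  · intro i j i' j' _ _ _ _ hcr
    rcases hcr with ⟨h1, h2⟩ | ⟨h1, h2⟩ <;>
      (beta_reduce at h1 h2; rw [hu] at h1; rw [hv] at h2;
       rcases h1 with h1 | ⟨e1, h1⟩ <;> rcases h2 with h2 | ⟨e2, h2⟩ <;>
         first | omega | linarith)
  · intro i q i' q' hik hq hik' hq' hne hcr
    have hLb : ∀ (I Q : ℕ),
        2*(I:ℝ) - 1 < tripL (fun i j => 2*(i:ℝ) + Real.arctan (p j) / 2) a b c I Q ∧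
        tripL (fun i j => 2*(i:ℝ) + Real.arctan (p j) / 2) a b c I Q < 2*(I:ℝ) + 1 := by
      intro I Q
      have h1 := g1_bounds (p (a I))
      have h2 := g1_bounds (p (b I))
      have h3 := g1_bounds (p (c I))
      unfold tripL
      split_ifs <;> beta_reduce <;> constructor <;>
        linarith [h1.1, h1.2, h2.1, h2.2, h3.1, h3.2]
    have hRb : ∀ (I Q : ℕ),
        2*(I:ℝ) < tripR (fun i => 2*(i:ℝ) + (if p (a i) < p (c i) then (1:ℝ)/4 else 1/2))
          (fun i => 2*(i:ℝ) + (if p (a i) < p (c i) then (1:ℝ)/2 else 1/4)) I Q ∧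
        tripR (fun i => 2*(i:ℝ) + (if p (a i) < p (c i) then (1:ℝ)/4 else 1/2))
          (fun i => 2*(i:ℝ) + (if p (a i) < p (c i) then (1:ℝ)/2 else 1/4)) I Q <
          2*(I:ℝ) + 1 := by
      intro I Q
      unfold tripR
      beta_reduce
      split_ifs <;> constructor <;> linarith
    rcases Nat.lt_trichotomy i i' with hlt | heq | hlt
    · have hcast : (i:ℝ) + 1 ≤ (i':ℝ) := by exact_mod_cast hlt
      have A := hLb i q; have B := hLb i' q'; have C := hRb i q; have D := hRb i' q'
      rcases hcr with ⟨h1, h2⟩ | ⟨h1, h2⟩ <;>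
        linarith [A.1, A.2, B.1, B.2, C.1, C.2, D.1, D.2]
    · subst heq
      have hqq : q ≠ q' := fun h => hne (by rw [h])
      revert hcr
      refine trip_nocross _ _ _ a b c i q q' hq hq' hqq ?_
      rcases hbet i hik with ⟨h1, h2⟩ | ⟨h1, h2⟩
      · left
        have hac : p (a i) < p (c i) := h1.trans h2
        refine ⟨?_, ?_, ?_⟩ <;> beta_reduce
        · have := Real.arctan_strictMono h1; linarith
        · have := Real.arctan_strictMono h2; linarith
        · simp only [if_pos hac]; norm_num
      · right
        have hca : p (c i) < p (a i) := h1.trans h2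
        have hac : ¬ p (a i) < p (c i) := not_lt.mpr hca.le
        refine ⟨?_, ?_, ?_⟩ <;> beta_reduce
        · have := Real.arctan_strictMono h1; linarith
        · have := Real.arctan_strictMono h2; linarith
        · simp only [if_neg hac]; norm_num
    · have hcast : (i':ℝ) + 1 ≤ (i:ℝ) := by exact_mod_cast hlt
      have A := hLb i q; have B := hLb i' q'; have C := hRb i q; have D := hRb i' q'
      rcases hcr with ⟨h1, h2⟩ | ⟨h1, h2⟩ <;>
        linarith [A.1, A.2, B.1, B.2, C.1, C.2, D.1, D.2]
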